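/- For a cycle C_n on n ≥ 3 vertices, the Roman domination number equals ⌈2n/3⌉. -/

import Mathlib

open SimpleGraph Finset

/-- A Roman dominating function: `f : V → ℕ` taking values in `{0,1,2}` such that
every vertex with value `0` has a neighbor with value `2`. -/
def IsRDF {V : Type*} (G : SimpleGraph V) (f : V → ℕ) : Prop :=
  (∀ v, f v ≤ 2) ∧ ∀ v, f v = 0 → ∃ u, G.Adj v u ∧ f u = 2

/-- The Roman domination number: minimum weight of a Roman dominating function. -/
noncomputable def romanDomNum {V : Type*} (G : SimpleGraph V) [Fintype V] : ℕ :=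
  sInf {w | ∃ f : V → ℕ, IsRDF G f ∧ ∑ v, f v = w}

/-- The Roman bondage number: minimum number of edges whose removal increases
the Roman domination number (`⊤` if no such edge set exists). -/
noncomputable def romanBondage {V : Type*} (G : SimpleGraph V) [Fintype V] : ℕ∞ :=
  sInf {k | ∃ B : Finset (Sym2 V), ↑B ⊆ G.edgeSet ∧ (B.card : ℕ∞) = k ∧
    romanDomNum (G.deleteEdges ↑B) > romanDomNum G}

/-- A dominating set: every vertex is in `S` or adjacent to a member of `S`. -/
def IsDomSet {V : Type*} (G : SimpleGraph V) (S : Set V) : Prop :=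
  ∀ v, v ∈ S ∨ ∃ u ∈ S, G.Adj v u

/-- The domination number: minimum size of a dominating set. -/
noncomputable def domNum {V : Type*} (G : SimpleGraph V) [Fintype V] : ℕ :=
  sInf {k | ∃ S : Finset V, IsDomSet G ↑S ∧ S.card = k}

/-- The bondage number: minimum number of edges whose removal increases
the domination number (`⊤` if no such edge set exists). -/
noncomputable def bondage {V : Type*} (G : SimpleGraph V) [Fintype V] : ℕ∞ :=
  sInf {k | ∃ B : Finset (Sym2 V), ↑B ⊆ G.edgeSet ∧ (B.card : ℕ∞) = k ∧
    domNum (G.deleteEdges ↑B) > domNum G}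



lemma base_sum (m : ℕ) : ∑ i ∈ Finset.range m, (if i % 3 = 0 then 2 else 0) = 2 * ((m + 2) / 3) := by
  induction m with
  | zero => simp
  | succ m ih =>
    rw [Finset.sum_range_succ, ih]
    split_ifs <;> omega

def gfun (n i : ℕ) : ℕ :=
  if i % 3 = 0 ∧ i + 1 ≠ n then 2 else if i + 2 = n ∧ n % 3 = 1 then 1 else 0

lemma gfun_le (n i : ℕ) : gfun n i ≤ 2 := by
  unfold gfun; split_ifs <;> omega

lemma gfun_eq_two {n i : ℕ} (h : i % 3 = 0) (h2 : i + 1 ≠ n) : gfun n i = 2 := by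
  simp [gfun, h, h2]

lemma gfun_zero_conds {n i : ℕ} (h : gfun n i = 0) :
    (¬(i % 3 = 0 ∧ i + 1 ≠ n)) ∧ ¬(i + 2 = n ∧ n % 3 = 1) := by
  unfold gfun at h; split_ifs at h with h1 h2 <;> simp_all

lemma upper (k : ℕ) :
    IsRDF (cycleGraph (k + 3)) (fun v => gfun (k + 3) v.val) ∧
    ∑ v : Fin (k + 3), gfun (k + 3) v.val = (2 * (k + 3) + 2) / 3 := by
  refine ⟨⟨fun v => gfun_le _ _, fun v hv => ?_⟩, ?_⟩
  · obtain ⟨h1, h2⟩ := gfun_zero_conds (show gfun (k + 3) v.val = 0 from hv)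
    have hvlt : (v : ℕ) < k + 3 := v.isLt
    by_cases hm : (v : ℕ) % 3 = 1
    · refine ⟨v - 1, ?_, ?_⟩
      · exact (cycleGraph_adj (n := k + 1)).mpr (Or.inl (sub_sub_cancel v 1))
      · show gfun (k + 3) ((v - 1 : Fin (k + 3)) : ℕ) = 2
        have h0 : v ≠ 0 := by
          intro h; rw [h] at hm; simp at hm
        have hc : ((v - 1 : Fin (k + 3)) : ℕ) = (v : ℕ) - 1 := by
          have := Fin.coe_sub_one (n := k + 2) v
          rwa [if_neg h0] at this
        rw [hc]
        exact gfun_eq_two (by omega) (by omega)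
    · refine ⟨v + 1, ?_, ?_⟩
      · exact (cycleGraph_adj (n := k + 1)).mpr (Or.inr (add_sub_cancel_left v 1))
      · show gfun (k + 3) ((v + 1 : Fin (k + 3)) : ℕ) = 2
        by_cases hl : (v : ℕ) + 1 = k + 3
        · have hc : ((v + 1 : Fin (k + 3)) : ℕ) = 0 := by
            have hv' : v = Fin.last (k + 2) := by
              apply Fin.ext; simp only [Fin.val_last]; omega
            rw [hv']
            simp
          rw [hc]
          exact gfun_eq_two (by omega) (by omega)
        · have hc : ((v + 1 : Fin (k + 3)) : ℕ) = (v : ℕ) + 1 := by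
            have := Fin.val_add_one (n := k + 2) v
            rw [if_neg (by intro h; rw [h] at hl; simp at hl)] at this
            exact this
          rw [hc]
          exact gfun_eq_two (by omega) (by omega)
  · rw [Fin.sum_univ_eq_sum_range (fun i => gfun (k + 3) i)]
    rw [Finset.sum_range_succ, Finset.sum_range_succ]
    rw [Finset.sum_congr rfl (g := fun i => if i % 3 = 0 then 2 else 0)
      (fun i hi => by
        rw [Finset.mem_range] at hi
        show gfun (k + 3) i = if i % 3 = 0 then 2 else 0
        unfold gfun
        split_ifs <;> omega)]
    rw [base_sum]
    unfold gfun
    split_ifs <;> omega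

lemma lower (k : ℕ) (f : Fin (k + 3) → ℕ) (hf : IsRDF (cycleGraph (k + 3)) f) :
    (2 * (k + 3) + 2) / 3 ≤ ∑ v, f v := by
  classical
  obtain ⟨hle, hdom⟩ := hf
  set V0 : Finset (Fin (k + 3)) := univ.filter (fun v => f v = 0) with hV0
  set V1 : Finset (Fin (k + 3)) := univ.filter (fun v => f v = 1) with hV1
  set V2 : Finset (Fin (k + 3)) := univ.filter (fun v => f v = 2) with hV2
  -- the choice function
  have hG : ∀ v : Fin (k + 3), ∃ u, f v = 0 → (cycleGraph (k + 3)).Adj v u ∧ f u = 2 := by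
    intro v
    by_cases h : f v = 0
    · obtain ⟨u, hu⟩ := hdom v h
      exact ⟨u, fun _ => hu⟩
    · exact ⟨v, fun h' => absurd h' h⟩
  choose G hGs using hG
  have h0 : V0.card ≤ 2 * V2.card := by
    apply Finset.card_le_mul_card_image_of_maps_to (f := G)
    · intro v hv
      rw [hV0, Finset.mem_filter] at hv
      rw [hV2, Finset.mem_filter]
      exact ⟨Finset.mem_univ _, (hGs v hv.2).2⟩
    · intro b hb
      calc #{a ∈ V0 | G a = b} ≤ ((cycleGraph (k + 3)).neighborFinset b).card := by
            apply Finset.card_le_card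
            intro a ha
            rw [Finset.mem_filter, hV0, Finset.mem_filter] at ha
            rw [SimpleGraph.mem_neighborFinset]
            have := (hGs a ha.1.2).1
            rw [ha.2] at this
            exact this.symm
        _ = 2 := cycleGraph_degree_three_le
  have hsum : 2 * V2.card + V1.card ≤ ∑ v, f v := by
    have hd : Disjoint V2 V1 := by
      rw [Finset.disjoint_filter]
      intro v _ h2; omega
    calc 2 * V2.card + V1.card = ∑ v ∈ V2, f v + ∑ v ∈ V1, f v := by
          rw [Finset.sum_congr rfl (fun v hv => (Finset.mem_filter.mp hv).2),
            Finset.sum_congr rfl (fun v hv => (Finset.mem_filter.mp hv).2)]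
          simp [mul_comm]
          rfl
      _ = ∑ v ∈ V2 ∪ V1, f v := (Finset.sum_union hd).symm
      _ ≤ ∑ v, f v := Finset.sum_le_sum_of_subset (Finset.subset_univ _)
  have hn : k + 3 ≤ V0.card + V1.card + V2.card := by
    have hsub : (univ : Finset (Fin (k + 3))) ⊆ V0 ∪ V1 ∪ V2 := by
      intro v _
      have := hle v
      simp only [Finset.mem_union, hV0, hV1, hV2, Finset.mem_filter, Finset.mem_univ, true_and]
      omega
    calc k + 3 = (univ : Finset (Fin (k + 3))).card := by simp
      _ ≤ (V0 ∪ V1 ∪ V2).card := Finset.card_le_card hsub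
      _ ≤ V0.card + V1.card + V2.card :=
          le_trans (Finset.card_union_le _ _)
            (by exact Nat.add_le_add_right (Finset.card_union_le _ _) _)
  omega


theorem roman_domination_cycle (n : ℕ) (hn : 3 ≤ n) :
    (romanDomNum (cycleGraph n) : ℤ) = ⌈(2 * n : ℚ) / 3⌉ := by
  obtain ⟨k, rfl⟩ : ∃ k, n = k + 3 := ⟨n - 3, by omega⟩
  set t : ℕ := (2 * (k + 3) + 2) / 3 with ht
  have hmem : t ∈ {w | ∃ f : Fin (k + 3) → ℕ, IsRDF (cycleGraph (k + 3)) f ∧ ∑ v, f v = w} :=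
    ⟨_, (upper k).1, (upper k).2⟩
  have heq : romanDomNum (cycleGraph (k + 3)) = t := by
    apply le_antisymm
    · exact Nat.sInf_le hmem
    · apply le_csInf ⟨t, hmem⟩
      rintro w ⟨f, hf, rfl⟩
      exact lower k f hf
  rw [heq, eq_comm, Int.ceil_eq_iff]
  have h1 : 2 * (k + 3) ≤ 3 * t := by omega
  have h2 : 3 * t ≤ 2 * (k + 3) + 2 := by omega
  constructor
  · rw [lt_div_iff₀ (by norm_num : (0:ℚ) < 3)]
    have : (3 * t : ℚ) ≤ 2 * (k + 3) + 2 := by exact_mod_cast h2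
    push_cast
    linarith
  · rw [div_le_iff₀ (by norm_num : (0:ℚ) < 3)]
    have : (2 * (k + 3) : ℚ) ≤ 3 * t := by exact_mod_cast h1
    push_cast
    linarith
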